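/- For any quasicontinuous function f : X → Y from a topological space X to a space Y that is strictly fragmented by a metric d, the set of discontinuity points of f is meager in X. -/

import Mathlib

/-- Quasicontinuity of a function between topological spaces. -/
def Quasicontinuous {X Y : Type*} [TopologicalSpace X] [TopologicalSpace Y] (f : X → Y) : Prop :=
  ∀ x : X, ∀ U ∈ nhds x, ∀ V ∈ nhds (f x),
    ∃ W : Set X, IsOpen W ∧ W.Nonempty ∧ W ⊆ U ∧ f '' W ⊆ V

theorem quasicontinuous_into_strictly_fragmentable_discontinuity_meagre
    {X Y : Type*} [TopologicalSpace X] [TopologicalSpace Y]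
    (d : Y → Y → ℝ)
    -- `d` is a metric on `Y`:
    (hd_self : ∀ y, d y y = 0)
    (hd_eq : ∀ y z, d y z = 0 → y = z)
    (hd_symm : ∀ y z, d y z = d z y)
    (hd_triangle : ∀ x y z, d x z ≤ d x y + d y z)
    -- `Y` is fragmented by `d`:
    (hfrag : ∀ ε > (0:ℝ), ∀ A : Set Y, A.Nonempty →
      ∃ U : Set Y, IsOpen U ∧ (A ∩ U).Nonempty ∧
        ∀ y ∈ A ∩ U, ∀ z ∈ A ∩ U, d y z < ε)
    -- the topology generated by `d` is finer than the topology of `Y`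
    -- (strict fragmentation):
    (hstrict : ∀ V : Set Y, IsOpen V → ∀ y ∈ V, ∃ ε > (0:ℝ), ∀ z, d y z < ε → z ∈ V)
    (f : X → Y) (hf : Quasicontinuous f) :
    IsMeagre {x : X | ¬ ContinuousAt f x} := by
  classical
  -- oscillation sets
  set E : ℝ → Set X := fun ε =>
    {x | ∀ U : Set X, IsOpen U → x ∈ U → ∃ y ∈ U, ∃ z ∈ U, ε ≤ d (f y) (f z)} with hE
  -- each E ε is closed
  have hclosed : ∀ ε : ℝ, IsClosed (E ε) := by
    intro ε
    rw [← isOpen_compl_iff, isOpen_iff_mem_nhds]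
    intro x hx
    simp only [hE, Set.mem_compl_iff, Set.mem_setOf_eq, not_forall] at hx
    obtain ⟨U, hUo, hxU, hU⟩ := hx
    push_neg at hU
    refine Filter.mem_of_superset (hUo.mem_nhds hxU) ?_
    intro x' hx'
    simp only [hE, Set.mem_compl_iff, Set.mem_setOf_eq, not_forall]
    exact ⟨U, hUo, hx', by push_neg; exact hU⟩
  -- each E ε has empty interior when ε > 0
  have hint : ∀ ε : ℝ, 0 < ε → interior (E ε) = ∅ := by
    intro ε hε
    by_contra h
    obtain ⟨x, hx⟩ := Set.nonempty_iff_ne_empty.2 h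
    obtain ⟨U, hUo, hUx, hfU⟩ := hfrag ε hε (f '' interior (E ε)) ⟨f x, x, hx, rfl⟩
    obtain ⟨_, ⟨x0, hx0, rfl⟩, hx0U⟩ := hUx
    obtain ⟨W, hWo, ⟨w, hw⟩, hWsub, hWim⟩ :=
      hf x0 (interior (E ε)) (isOpen_interior.mem_nhds hx0) U (hUo.mem_nhds hx0U)
    have hwE : w ∈ E ε := interior_subset (hWsub hw)
    obtain ⟨y, hy, z, hz, hdyz⟩ := hwE W hWo hw
    have hy' : f y ∈ f '' interior (E ε) ∩ U :=
      ⟨⟨y, hWsub hy, rfl⟩, hWim ⟨y, hy, rfl⟩⟩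
    have hz' : f z ∈ f '' interior (E ε) ∩ U :=
      ⟨⟨z, hWsub hz, rfl⟩, hWim ⟨z, hz, rfl⟩⟩
    exact absurd (hfU _ hy' _ hz') (not_lt.2 hdyz)
  -- if x is outside all E ε, f is continuous at x
  have hcont : ∀ x : X, (∀ n : ℕ, x ∉ E ((n : ℝ) + 1)⁻¹) → ContinuousAt f x := by
    intro x hx
    intro V hV
    obtain ⟨V', hV'V, hV'o, hxV'⟩ := mem_nhds_iff.1 hV
    obtain ⟨ε, hε, hball⟩ := hstrict V' hV'o (f x) hxV'
    obtain ⟨n, hn⟩ := exists_nat_one_div_lt hε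
    have hxn := hx n
    show f ⁻¹' V ∈ nhds x
    simp only [hE, Set.mem_setOf_eq, not_forall] at hxn
    obtain ⟨U, hUo, hxU, hU⟩ := hxn
    push_neg at hU
    refine Filter.mem_of_superset (hUo.mem_nhds hxU) ?_
    intro y hy
    have : d (f x) (f y) < ((n : ℝ) + 1)⁻¹ := hU x hxU y hy
    have : d (f x) (f y) < ε := this.trans (by rwa [one_div] at hn)
    exact hV'V (hball _ this)
  -- the discontinuity set is contained in the countable union
  have hsub : {x : X | ¬ ContinuousAt f x} ⊆ ⋃ n : ℕ, E ((n : ℝ) + 1)⁻¹ := by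
    intro x hx
    by_contra h
    simp only [Set.mem_iUnion, not_exists] at h
    exact hx (hcont x h)
  refine IsMeagre.mono hsub ?_
  refine isMeagre_iUnion fun n => ?_
  have hnd : IsNowhereDense (E ((n : ℝ) + 1)⁻¹) := by
    rw [IsNowhereDense, (hclosed _).closure_eq]
    exact hint _ (by positivity)
  rw [isMeagre_iff_countable_union_isNowhereDense]
  exact ⟨{E ((n : ℝ) + 1)⁻¹}, by simpa using hnd, Set.countable_singleton _, by simp⟩
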